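/- arXiv:1810.05410 — 2 statements merged into one kernel-verified Lean document; each statement's English description precedes it below -/
import Mathlib

section
/- Let (s,h) be a memory state, h' ⊑ h a subheap, and q ≥ 1. Then Labels_q(s,h') ⊆ Labels_q(s,h): every labelled location of (s,h') (a value s(x_i) for i ∈ [1,q], or a defined meet-point [[m_q(x_i,x_j)]]_{s,h'}) is also a labelled location of (s,h). -/
/-!
Taking subheaps can only reduce the set of labelled locations:
`Labels_q(s,h') ⊆ Labels_q(s,h)` whenever `h' ⊑ h`.
-/

namespace SLLabels

abbrev Var := ℕ
abbrev Loc := ℕ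

/-- A heap: a partial function on locations with finite domain. -/
structure Heap where
  f : Loc → Option Loc
  fin : {l | f l ≠ none}.Finite

/-- `h.iter n` is the `n`-fold functional composition of the partial function `h`. -/
def Heap.iter (h : Heap) : ℕ → Loc → Option Loc
  | 0, l => some l
  | n + 1, l => (h.iter n l).bind h.f

/-- `h' ⊑ h`: the domain of `h'` is included in the one of `h` and they agree on it. -/
def Heap.sub (h' h : Heap) : Prop := ∀ l v, h'.f l = some v → h.f l = some v

/-- `ℓ` satisfies the three defining conditions of the meet-point `m_q(x_i, x_j)`
in the memory state `(s, h)`. -/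
def IsMeetPoint (q : ℕ) (s : Var → Loc) (h : Heap) (i j : Var) (ℓ : Loc) : Prop :=
  (∃ L₁ L₂ : ℕ,
      h.iter L₁ (s i) = some ℓ ∧ h.iter L₂ (s j) = some ℓ ∧
      ∀ L₁' < L₁, ∀ (L₂' : ℕ) (m : Loc),
        h.iter L₁' (s i) = some m → h.iter L₂' (s j) ≠ some m) ∧
  ∃ k ∈ Finset.Icc 1 q, ∃ L : ℕ, h.iter L ℓ = some (s k)

/-- The set of labelled locations of `(s,h)`: the values `s x_i` for `i ∈ [1,q]`
together with the defined meet-points `m_q(x_i,x_j)` for `i,j ∈ [1,q]`. -/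
def Labels (q : ℕ) (s : Var → Loc) (h : Heap) : Set Loc :=
  {ℓ | (∃ i ∈ Finset.Icc 1 q, s i = ℓ) ∨
       ∃ i ∈ Finset.Icc 1 q, ∃ j ∈ Finset.Icc 1 q, IsMeetPoint q s h i j ℓ}

/-- Iteration adds. -/
lemma Heap.iter_add (h : Heap) (a b : ℕ) (l : Loc) :
    h.iter (a + b) l = (h.iter a l).bind (h.iter b) := by
  induction b with
  | zero =>
      cases hx : h.iter a l <;> simp [Heap.iter, hx]
  | succ b ih =>
      have : a + (b + 1) = (a + b) + 1 := by omega
      rw [this]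
      show ((h.iter (a+b) l).bind h.f) = _
      rw [ih]
      cases hx : h.iter a l <;> simp [Heap.iter, hx]

/-- Iteration is monotone w.r.t. subheaps. -/
lemma Heap.iter_mono {h h' : Heap} (hsub : h'.sub h) :
    ∀ (n : ℕ) (l v : Loc), h'.iter n l = some v → h.iter n l = some v := by
  intro n
  induction n with
  | zero => intro l v hv; simpa [Heap.iter] using hv
  | succ n ih =>
      intro l v hv
      rw [Heap.iter] at hv ⊢
      rcases Option.bind_eq_some_iff.1 hv with ⟨w, hw, hfw⟩
      rw [ih l w hw]
      exact hsub w v hfw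

/-- A prefix of a defined iteration is defined. -/
lemma Heap.iter_prefix {h : Heap} {n : ℕ} {l v : Loc} (hv : h.iter n l = some v)
    {m : ℕ} (hm : m ≤ n) : ∃ z, h.iter m l = some z := by
  have hn : n = m + (n - m) := by omega
  rw [hn, Heap.iter_add] at hv
  cases hx : h.iter m l with
  | none => rw [hx] at hv; simp at hv
  | some z => exact ⟨z, rfl⟩

/-- If `h' ⊑ h`, `h'` iterates `n` times from `x`, and `m ≤ n`, then the `m`-th
`h`-iterate from `x` is also the `m`-th `h'`-iterate. -/
lemma Heap.sub_iter_eq {h h' : Heap} (hsub : h'.sub h) {n : ℕ} {x v : Loc}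
    (hv : h'.iter n x = some v) {m : ℕ} (hm : m ≤ n) {w : Loc}
    (hw : h.iter m x = some w) : h'.iter m x = some w := by
  rcases Heap.iter_prefix hv hm with ⟨z, hz⟩
  have := Heap.iter_mono hsub m x z hz
  rw [this] at hw
  rw [hz, Option.some_inj.1 hw]

/-- Composition along a path: if the `a`-th iterate from `x` is `y` and the
`(a+b)`-th iterate is `v`, then the `b`-th iterate from `y` is `v`. -/
lemma Heap.iter_trans {h : Heap} {a b : ℕ} {x y v : Loc}
    (hy : h.iter a x = some y) (hv : h.iter (a + b) x = some v) :
    h.iter b y = some v := by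
  rw [Heap.iter_add, hy] at hv
  simpa using hv

/-- Lemma: labelled locations of a subheap are labelled locations of the full heap. -/
theorem labels_mono (q : ℕ) (hq : 1 ≤ q) (s : Var → Loc) (h h' : Heap)
    (hsub : h'.sub h) : Labels q s h' ⊆ Labels q s h := by
  intro ℓ hℓ
  rcases hℓ with hvar | ⟨i, hi, j, hj, ⟨⟨L₁, L₂, h1, h2, hmin⟩, k, hk, L, h3⟩⟩
  · exact Or.inl hvar
  · right
    have H1 : h.iter L₁ (s i) = some ℓ := Heap.iter_mono hsub _ _ _ h1
    have H2 : h.iter L₂ (s j) = some ℓ := Heap.iter_mono hsub _ _ _ h2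
    have H3 : h.iter L ℓ = some (s k) := Heap.iter_mono hsub _ _ _ h3
    by_cases hA : ∀ L₁' < L₁, ∀ (L₂' : ℕ) (m : Loc),
        h.iter L₁' (s i) = some m → h.iter L₂' (s j) ≠ some m
    · exact ⟨i, hi, j, hj, ⟨⟨L₁, L₂, H1, H2, hA⟩, k, hk, L, H3⟩⟩
    · -- Case B : an earlier meeting exists in `h`; then `ℓ = m_h(x_j, x_i)`.
      push_neg at hA
      obtain ⟨Ls, hLs, Lt, m, hm1, hm2⟩ := hA
      -- `m` as an `h'`-iterate of `s i`
      have h'm : h'.iter Ls (s i) = some m :=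
        Heap.sub_iter_eq hsub h1 (le_of_lt hLs) hm1
      -- the meeting of `x_j` with `m` must happen strictly after `L₂`
      have hLt : L₂ < Lt := by
        by_contra hc
        exact hmin Ls hLs Lt m h'm (Heap.sub_iter_eq hsub h2 (by omega) hm2)
      refine ⟨j, hj, i, hi, ⟨⟨L₂, L₁, H2, H1, ?_⟩, k, hk, L, H3⟩⟩
      intro L₂'' hL₂'' L₁'' p hp hip
      -- `p` as an `h'`-iterate of `s j`
      have h'pj : h'.iter L₂'' (s j) = some p :=
        Heap.sub_iter_eq hsub h2 (le_of_lt hL₂'') hp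
      rcases lt_or_ge L₁'' L₁ with hc | hc
      · -- early meeting inside `h'`: contradicts minimality in `h'`
        exact hmin L₁'' hc L₂'' p (Heap.sub_iter_eq hsub h1 (le_of_lt hc) hip) h'pj
      · -- `p` lies on the cycle through `ℓ`
        set c1 := L₁'' - L₁ with hc1
        set c2 := L₂ - L₂'' with hc2
        set c3 := Lt - L₂ with hc3
        set c4 := L₁ - Ls with hc4
        have f1 : h.iter c1 ℓ = some p :=
          Heap.iter_trans H1 (by rw [show L₁ + c1 = L₁'' by omega]; exact hip)
        have f2 : h.iter c2 p = some ℓ :=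
          Heap.iter_trans hp (by rw [show L₂'' + c2 = L₂ by omega]; exact H2)
        have f3 : h.iter c3 ℓ = some m :=
          Heap.iter_trans H2 (by rw [show L₂ + c3 = Lt by omega]; exact hm2)
        have f4 : h.iter c4 m = some ℓ :=
          Heap.iter_trans hm1 (by rw [show Ls + c4 = L₁ by omega]; exact H1)
        set T := c1 + c2 with hT
        set T' := c3 + c4 with hT'
        have hTℓ : h.iter T ℓ = some ℓ := by
          rw [hT, Heap.iter_add, f1]; simpa using f2
        have hT'ℓ : h.iter T' ℓ = some ℓ := by
          rw [hT', Heap.iter_add, f3]; simpa using f4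
        have perT : ∀ n : ℕ, h.iter (n + T) ℓ = h.iter n ℓ := by
          intro n
          rw [show n + T = T + n by omega, Heap.iter_add, hTℓ]; simp
        have perT' : ∀ n : ℕ, h.iter (n + T') ℓ = h.iter n ℓ := by
          intro n
          rw [show n + T' = T' + n by omega, Heap.iter_add, hT'ℓ]; simp
        have hc2pos : 1 ≤ c2 := by omega
        have hc4pos : 1 ≤ c4 := by omega
        rcases le_or_gt c4 c2 with hcase | hcase
        · -- `m` appears on the `h'`-path of `x_j` between `p` and `ℓ`
          have key : h.iter (c1 + (c2 - c4)) ℓ = some m := by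
            have e1 : h.iter (T - c4) ℓ = h.iter ((T - c4) + T') ℓ := (perT' _).symm
            have e2 : (T - c4) + T' = c3 + T := by omega
            calc h.iter (c1 + (c2 - c4)) ℓ = h.iter (T - c4) ℓ := by
                  rw [show c1 + (c2 - c4) = T - c4 by omega]
              _ = h.iter ((T - c4) + T') ℓ := e1
              _ = h.iter (c3 + T) ℓ := by rw [e2]
              _ = h.iter c3 ℓ := perT c3
              _ = some m := f3
          have keyp : h.iter (c2 - c4) p = some m :=
            Heap.iter_trans f1 key
          have hj2 : h.iter (L₂'' + (c2 - c4)) (s j) = some m := by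
            rw [Heap.iter_add, hp]; simpa using keyp
          have hj2' : h'.iter (L₂'' + (c2 - c4)) (s j) = some m :=
            Heap.sub_iter_eq hsub h2 (by omega) hj2
          exact hmin Ls hLs _ m h'm hj2'
        · -- `p` appears on the `h'`-path of `x_i` between `m` and `ℓ`
          have key : h.iter (c3 + (c4 - c2)) ℓ = some p := by
            have e1 : h.iter (T' - c2) ℓ = h.iter ((T' - c2) + T) ℓ := (perT _).symm
            have e2 : (T' - c2) + T = c1 + T' := by omega
            calc h.iter (c3 + (c4 - c2)) ℓ = h.iter (T' - c2) ℓ := by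
                  rw [show c3 + (c4 - c2) = T' - c2 by omega]
              _ = h.iter ((T' - c2) + T) ℓ := e1
              _ = h.iter (c1 + T') ℓ := by rw [e2]
              _ = h.iter c1 ℓ := perT' c1
              _ = some p := f1
          have keym : h.iter (c4 - c2) m = some p :=
            Heap.iter_trans f3 key
          have hi2 : h.iter (Ls + (c4 - c2)) (s i) = some p := by
            rw [Heap.iter_add, hm1]; simpa using keym
          have hi2' : h'.iter (Ls + (c4 - c2)) (s i) = some p :=
            Heap.sub_iter_eq hsub h1 (by omega) hi2
          exact hmin _ (by omega) L₂'' p hi2' h'pj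

end SLLabels
end

section
/- Let alloc⁻¹_y(x) denote the SL(∗,−∗,ls) formula x ↪ x ∨ y ↪ x ∨ [(alloc(y) ∧ ¬(y ↪ x) ∧ size = 1) −⊛ reach(y,x) = 2]₁. Then for all memory states (s,h) with s(x) ≠ s(y): (s,h) ⊨ alloc⁻¹_y(x) if and only if s(x) ∈ ran(h). -/
/-! Correctness of the formula `alloc⁻¹_y(x)` expressing `s(x) ∈ ran(h)`. -/

namespace SL4

abbrev Var := ℕ
abbrev Loc := ℕ

/-- A heap: a partial function on locations with finite domain. -/
structure Heap where
  f : Loc → Option Loc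
  fin : {l | f l ≠ none}.Finite

/-- Domain of a heap. -/
def Heap.dom (h : Heap) : Set Loc := {l | h.f l ≠ none}

/-- Range of a heap. -/
def Heap.ran (h : Heap) : Set Loc := {l' | ∃ l, h.f l = some l'}

/-- Disjointness of heaps. -/
def Heap.Disj (h₁ h₂ : Heap) : Prop := ∀ l, h₁.f l = none ∨ h₂.f l = none

/-- Union of heaps (left-biased; used on disjoint heaps). -/
def Heap.union (h₁ h₂ : Heap) : Heap where
  f := fun l => (h₁.f l).or (h₂.f l)
  fin := by
    apply Set.Finite.subset (h₁.fin.union h₂.fin)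
    intro l hl
    simp only [Set.mem_setOf_eq] at hl
    by_cases h1 : h₁.f l = none
    · right
      simp only [Set.mem_setOf_eq]
      intro h2
      exact hl (by simp [h1, h2])
    · left; exact h1

/-- `h.iter n` is the `n`-fold functional composition of the partial function `h`. -/
def Heap.iter (h : Heap) : ℕ → Loc → Option Loc
  | 0, l => some l
  | n + 1, l => (h.iter n l).bind h.f

/-- Semantics of the precise list-segment predicate `ls(x,y)`. -/
def lsSem (s : Var → Loc) (h : Heap) (x y : Var) : Prop :=
  (h.dom = ∅ ∧ s x = s y) ∨
  ∃ n : ℕ, 1 ≤ n ∧ ∃ ℓ : ℕ → Loc,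
    ℓ 0 = s x ∧ ℓ n = s y ∧
    (∀ i ≤ n, ∀ j ≤ n, i ≠ j → ℓ i ≠ ℓ j) ∧
    h.dom = {l | ∃ i < n, ℓ i = l} ∧
    (∀ i < n, h.f (ℓ i) = some (ℓ (i + 1)))

/-- Formulas of `SL(∗, −∗, ls)`. -/
inductive Form : Type
  | eq (x y : Var)
  | pto (x y : Var)
  | ls (x y : Var)
  | emp
  | top
  | not (φ : Form)
  | and (φ ψ : Form)
  | sep (φ ψ : Form)
  | wand (φ ψ : Form)

/-- Satisfaction relation of `SL(∗, −∗, ls)`. -/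
def Sat (s : Var → Loc) (h : Heap) : Form → Prop
  | .eq x y => s x = s y
  | .pto x y => h.f (s x) = some (s y)
  | .ls x y => lsSem s h x y
  | .emp => h.dom = ∅
  | .top => True
  | .not φ => ¬ Sat s h φ
  | .and φ ψ => Sat s h φ ∧ Sat s h ψ
  | .sep φ ψ => ∃ h₁ h₂ : Heap, h₁.Disj h₂ ∧ h₁.union h₂ = h ∧ Sat s h₁ φ ∧ Sat s h₂ ψ
  | .wand φ ψ => ∀ h₁ : Heap, h₁.Disj h → Sat s h₁ φ → Sat s (h.union h₁) ψ

/-- Falsum `⊥`. -/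
def fBot : Form := .not .top

/-- Disjunction. -/
def fOr (φ ψ : Form) : Form := .not (.and (.not φ) (.not ψ))

/-- Implication. -/
def fImp (φ ψ : Form) : Form := fOr (.not φ) ψ

/-- Bi-implication. -/
def fIff (φ ψ : Form) : Form := .and (fImp φ ψ) (fImp ψ φ)

/-- `alloc(x) := (x ↪ x) −∗ ⊥`. -/
def alloc (x : Var) : Form := .wand (.pto x x) fBot

/-- `size ≥ β`. -/
def sizeGe : ℕ → Form
  | 0 => .top
  | β + 1 => .sep (sizeGe β) (.not .emp)

/-- `size = β`. -/
def sizeEq (β : ℕ) : Form := .and (sizeGe β) (.not (sizeGe (β + 1)))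

/-- Septraction `φ −⊛ ψ := ¬(φ −∗ ¬ψ)`. -/
def septr (φ ψ : Form) : Form := .not (.wand φ (.not ψ))

/-- `[φ]_γ := (size = γ ∧ φ) ∗ ⊤`. -/
def boxed (γ : ℕ) (φ : Form) : Form := .sep (.and (sizeEq γ) φ) .top

/-- `reach(x,y) = γ := [ls(x,y)]_γ`. -/
def reachEq (x y : Var) (γ : ℕ) : Form := boxed γ (.ls x y)

/-- `reach(x,y) ≤ γ := ⋁_{0 ≤ γ' ≤ γ} reach(x,y) = γ'`. -/
def reachLe (x y : Var) : ℕ → Form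
  | 0 => reachEq x y 0
  | γ + 1 => fOr (reachLe x y γ) (reachEq x y (γ + 1))

/-- `alloc⁻¹_y(x) := x ↪ x ∨ y ↪ x ∨
    [(alloc(y) ∧ ¬(y ↪ x) ∧ size = 1) −⊛ reach(y,x) = 2]₁`. -/
def allocInv (x y : Var) : Form :=
  fOr (.pto x x) (fOr (.pto y x)
    (boxed 1 (septr (.and (alloc y) (.and (.not (.pto y x)) (sizeEq 1)))
      (reachEq y x 2))))

/-! ### Auxiliary lemmas -/

lemma Heap.ext' {h₁ h₂ : Heap} (hf : h₁.f = h₂.f) : h₁ = h₂ := by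
  cases h₁; cases h₂; simp_all

lemma Heap.union_f (h₁ h₂ : Heap) (l : Loc) :
    (h₁.union h₂).f l = (h₁.f l).or (h₂.f l) := rfl

lemma Heap.dom_union (h₁ h₂ : Heap) : (h₁.union h₂).dom = h₁.dom ∪ h₂.dom := by
  ext l
  simp only [Heap.dom, Set.mem_setOf_eq, Set.mem_union, Heap.union_f]
  cases h₁.f l <;> simp [Option.or]

lemma Heap.dom_finite (h : Heap) : h.dom.Finite := h.fin

/-- The empty heap. -/
def Heap.empty : Heap := ⟨fun _ => none, by simp⟩

lemma Heap.dom_empty : Heap.empty.dom = ∅ := by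
  ext l; simp [Heap.dom, Heap.empty]

/-- A singleton heap. -/
def Heap.single (l l' : Loc) : Heap :=
  ⟨fun m => if m = l then some l' else none, by
    apply Set.Finite.subset (Set.finite_singleton l)
    intro m hm
    simp only [Set.mem_setOf_eq] at hm
    by_contra hne
    simp only [Set.mem_singleton_iff] at hne
    simp [hne] at hm⟩

lemma Heap.single_f (l l' m : Loc) :
    (Heap.single l l').f m = if m = l then some l' else none := rfl

lemma Heap.dom_single (l l' : Loc) : (Heap.single l l').dom = {l} := by
  ext m
  simp only [Heap.dom, Heap.single_f, Set.mem_setOf_eq, Set.mem_singleton_iff]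
  by_cases hm : m = l <;> simp [hm]

/-- Remove a location from a heap. -/
def Heap.erase (h : Heap) (l : Loc) : Heap :=
  ⟨fun m => if m = l then none else h.f m, by
    apply Set.Finite.subset h.fin
    intro m hm
    simp only [Set.mem_setOf_eq] at hm ⊢
    by_cases hml : m = l
    · simp [hml] at hm
    · simpa [hml] using hm⟩

lemma Heap.erase_f (h : Heap) (l m : Loc) :
    (h.erase l).f m = if m = l then none else h.f m := rfl

lemma Heap.dom_erase (h : Heap) (l : Loc) : (h.erase l).dom = h.dom \ {l} := by
  ext m
  simp only [Heap.dom, Heap.erase_f, Set.mem_setOf_eq, Set.mem_diff,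
    Set.mem_singleton_iff]
  by_cases hml : m = l <;> simp [hml]

lemma Heap.disj_dom {h₁ h₂ : Heap} (hd : h₁.Disj h₂) : h₁.dom ∩ h₂.dom = ∅ := by
  ext l
  simp only [Set.mem_inter_iff, Heap.dom, Set.mem_setOf_eq, Set.mem_empty_iff_false,
    iff_false, not_and]
  intro h1 h2
  rcases hd l with hl | hl <;> [exact h1 hl; exact h2 hl]

lemma Heap.split_at (h : Heap) {l a : Loc} (hl : h.f l = some a) :
    (h.erase l).Disj (Heap.single l a) ∧ (h.erase l).union (Heap.single l a) = h := by
  constructor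
  · intro m
    by_cases hml : m = l
    · left; simp [Heap.erase_f, hml]
    · right; simp [Heap.single_f, hml]
  · apply Heap.ext'
    funext m
    by_cases hml : m = l
    · simp [Heap.union_f, Heap.erase_f, Heap.single_f, hml, Option.or, hl]
    · simp [Heap.union_f, Heap.erase_f, Heap.single_f, hml]

lemma Heap.union_f_left {h₁ h₂ : Heap} {m v : Loc} (hm : h₁.f m = some v) :
    (h₁.union h₂).f m = some v := by
  simp [Heap.union_f, hm, Option.or]

lemma Sat_fOr (s : Var → Loc) (h : Heap) (φ ψ : Form) :
    Sat s h (fOr φ ψ) ↔ Sat s h φ ∨ Sat s h ψ := by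
  simp only [fOr, Sat]
  tauto

lemma Sat_sizeGe (s : Var → Loc) (h : Heap) (n : ℕ) :
    Sat s h (sizeGe n) ↔ n ≤ h.dom.ncard := by
  induction n generalizing h with
  | zero => simp [sizeGe, Sat]
  | succ n ih =>
    simp only [sizeGe, Sat]
    constructor
    · rintro ⟨h₁, h₂, hd, hu, hs1, hs2⟩
      have hdom : h.dom = h₁.dom ∪ h₂.dom := by rw [← hu, Heap.dom_union]
      have hcard : h.dom.ncard = h₁.dom.ncard + h₂.dom.ncard := by
        rw [hdom, Set.ncard_union_eq (Set.disjoint_iff_inter_eq_empty.2 (Heap.disj_dom hd))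
          h₁.dom_finite h₂.dom_finite]
      have h2ne : h₂.dom.Nonempty := Set.nonempty_iff_ne_empty.2 hs2
      have h2pos : 0 < h₂.dom.ncard := (Set.ncard_pos h₂.dom_finite).2 h2ne
      have := ih h₁ |>.1 hs1
      omega
    · intro hn
      have hne : h.dom.Nonempty := by
        rw [Set.nonempty_iff_ne_empty]
        intro he
        rw [he] at hn
        simp at hn
      obtain ⟨l, hl⟩ := hne
      obtain ⟨a, ha⟩ : ∃ a, h.f l = some a := by
        cases hfl : h.f l with
        | none => exact absurd hfl hl
        | some a => exact ⟨a, rfl⟩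
      obtain ⟨hd, hu⟩ := h.split_at ha
      refine ⟨h.erase l, Heap.single l a, hd, hu, ?_, ?_⟩
      · rw [ih]
        have : (h.dom \ {l}).ncard + 1 = h.dom.ncard :=
          Set.ncard_diff_singleton_add_one hl h.dom_finite
        rw [Heap.dom_erase]
        omega
      · rw [Heap.dom_single]
        simp [Heap.dom]

lemma Sat_sizeEq (s : Var → Loc) (h : Heap) (n : ℕ) :
    Sat s h (sizeEq n) ↔ h.dom.ncard = n := by
  rw [sizeEq]
  show Sat s h (sizeGe n) ∧ ¬ Sat s h (sizeGe (n+1)) ↔ _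
  rw [Sat_sizeGe, Sat_sizeGe]
  omega

lemma Sat_alloc (s : Var → Loc) (h : Heap) (y : Var) :
    Sat s h (alloc y) ↔ s y ∈ h.dom := by
  simp only [alloc, fBot, Sat]
  constructor
  · intro hw
    by_contra hns
    simp only [Heap.dom, Set.mem_setOf_eq, not_not] at hns
    refine hw (Heap.single (s y) (s y)) ?_ ?_ trivial
    · intro m
      by_cases hm : m = s y
      · right; rw [hm]; exact hns
      · left; simp [Heap.single_f, hm]
    · simp [Sat, Heap.single_f]
  · intro hm h₁ hd hp ht
    rcases hd (s y) with hl | hl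
    · rw [hp] at hl; exact nomatch hl
    · exact hm hl

lemma Sat_septr (s : Var → Loc) (h : Heap) (φ ψ : Form) :
    Sat s h (septr φ ψ) ↔
      ∃ h' : Heap, h'.Disj h ∧ Sat s h' φ ∧ Sat s (h.union h') ψ := by
  simp only [septr, Sat]
  push_neg
  rfl

lemma Heap.dom_eq_singleton {h : Heap} {l : Loc} (hd : h.dom = {l}) :
    ∃ a, h.f = (Heap.single l a).f := by
  have hl : l ∈ h.dom := by rw [hd]; rfl
  obtain ⟨a, ha⟩ : ∃ a, h.f l = some a := by
    cases hfl : h.f l with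
    | none => exact absurd hfl hl
    | some a => exact ⟨a, rfl⟩
  refine ⟨a, funext fun m => ?_⟩
  by_cases hm : m = l
  · subst hm; simp [Heap.single_f, ha]
  · simp only [Heap.single_f, if_neg hm]
    by_contra hne
    have : m ∈ h.dom := hne
    rw [hd] at this
    exact hm this

/-- For memory states with `s x ≠ s y`, the formula `alloc⁻¹_y(x)` holds
iff `s x` has a predecessor in the heap. -/
theorem allocInv_correct (s : Var → Loc) (h : Heap) (x y : Var)
    (hxy : s x ≠ s y) :
    Sat s h (allocInv x y) ↔ s x ∈ h.ran := by
  rw [allocInv, Sat_fOr, Sat_fOr]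
  constructor
  · rintro (hp | hp | hb)
    · exact ⟨s x, hp⟩
    · exact ⟨s y, hp⟩
    · -- the boxed septraction case
      obtain ⟨h₁, h₂, hd12, hu, ⟨hs1, hsep⟩, -⟩ := hb
      rw [Sat_septr] at hsep
      obtain ⟨h', hd', hψ, hreach⟩ := hsep
      obtain ⟨hal, hnp, hs'⟩ := hψ
      rw [Sat_alloc] at hal
      -- dom h' = {s y}
      rw [Sat_sizeEq, Set.ncard_eq_one] at hs'
      obtain ⟨b, hb'⟩ := hs'
      have hby : b = s y := by
        have := hal
        rw [hb'] at this
        exact this.symm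
      subst hby
      obtain ⟨z, hz⟩ : ∃ z, h'.f (s y) = some z := by
        cases hfy : h'.f (s y) with
        | none => exact absurd hfy hal
        | some z => exact ⟨z, rfl⟩
      have hzx : z ≠ s x := by
        intro hzx
        apply hnp
        show h'.f (s y) = some (s x)
        rw [hz, hzx]
      -- dom h₁ = {a}
      rw [Sat_sizeEq, Set.ncard_eq_one] at hs1
      obtain ⟨a, ha1⟩ := hs1
      -- unpack reach(y,x) = 2
      obtain ⟨H₁, H₂, hD, hU, ⟨hs2, hls⟩, -⟩ := hreach
      rw [Sat_sizeEq] at hs2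
      have hsub : ∀ m v, H₁.f m = some v → (h₁.union h').f m = some v := by
        intro m v hmv
        rw [← hU]
        exact Heap.union_f_left hmv
      rcases hls with ⟨hde, _⟩ | ⟨n, hn1, ℓ, h0, hne, hdist, hdomH, hstep⟩
      · rw [hde] at hs2; simp at hs2
      -- h₁.f (s y) = none
      have h1y : h₁.f (s y) = none := by
        rcases hd' (s y) with hl | hl
        · rw [hz] at hl; exact nomatch hl
        · exact hl
      have hstep0 : H₁.f (s y) = some (ℓ 1) := h0 ▸ hstep 0 hn1
      have hHy : (h₁.union h').f (s y) = some z := by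
        simp [Heap.union_f, h1y, hz, Option.or]
      have hl1z : ℓ 1 = z := by
        have h1 := hsub _ _ hstep0
        rw [hHy] at h1
        injection h1 with h1
        exact h1.symm
      have hn2 : 2 ≤ n := by
        rcases Nat.lt_or_ge n 2 with h2 | h2
        · exfalso
          have hn1' : n = 1 := by omega
          rw [hn1'] at hne
          exact hzx (hl1z ▸ hne)
        · exact h2
      -- ℓ 1 ≠ s y
      have hl1y : ℓ 1 ≠ s y := by
        have := hdist 1 (by omega) 0 (by omega) (by omega)
        rw [h0] at this
        exact this
      have hz_ne_y : z ≠ s y := hl1z ▸ hl1y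
      -- dom H₁ ⊆ {a} ∪ {s y}
      have hdomsub : ∀ m, m ∈ H₁.dom → m = a ∨ m = s y := by
        intro m hm
        have : m ∈ (h₁.union h').dom := by
          rw [← hU, Heap.dom_union]
          exact Set.mem_union_left _ hm
        rw [Heap.dom_union, ha1, hb'] at this
        rcases this with hma | hmy
        · exact Or.inl hma
        · exact Or.inr hmy
      have hn_eq : n = 2 := by
        by_contra hne2
        have hn3 : 3 ≤ n := by omega
        have hm1 : ℓ 1 ∈ H₁.dom := by
          rw [hdomH]; exact ⟨1, by omega, rfl⟩
        have hm2 : ℓ 2 ∈ H₁.dom := by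
          rw [hdomH]; exact ⟨2, by omega, rfl⟩
        have hl2y : ℓ 2 ≠ s y := by
          have := hdist 2 (by omega) 0 (by omega) (by omega)
          rw [h0] at this
          exact this
        have h12 : ℓ 1 ≠ ℓ 2 := hdist 1 (by omega) 2 (by omega) (by omega)
        rcases hdomsub _ hm1 with e1 | e1
        · rcases hdomsub _ hm2 with e2 | e2
          · exact h12 (e1.trans e2.symm)
          · exact hl2y e2
        · exact hl1y e1
      -- the step ℓ1 → ℓ2 = s x is in h₁
      have hstep1 : H₁.f (ℓ 1) = some (ℓ 2) := hstep 1 (by omega)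
      have hHz : (h₁.union h').f z = some (ℓ 2) := hl1z ▸ hsub _ _ hstep1
      have h'z : h'.f z = none := by
        by_contra hc
        have : z ∈ h'.dom := hc
        rw [hb'] at this
        exact hz_ne_y this
      have h1z : h₁.f z = some (ℓ 2) := by
        rw [Heap.union_f, h'z] at hHz
        cases hc : h₁.f z with
        | none => rw [hc] at hHz; exact absurd hHz (by simp [Option.or])
        | some v => rw [hc] at hHz; simpa [Option.or] using hHz
      have hl2x : ℓ 2 = s x := hn_eq ▸ hne
      refine ⟨z, ?_⟩
      rw [← hu]
      exact Heap.union_f_left (hl2x ▸ h1z)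
  · rintro ⟨l, hl⟩
    by_cases hlx : l = s x
    · left
      subst hlx
      exact hl
    by_cases hly : l = s y
    · right; left
      subst hly
      exact hl
    right; right
    -- split h at l
    obtain ⟨hdisj, hun⟩ := h.split_at hl
    refine ⟨Heap.single l (s x), h.erase l, ?_, ?_, ⟨?_, ?_⟩, trivial⟩
    · intro m
      rcases hdisj m with hm | hm
      · exact Or.inr hm
      · exact Or.inl hm
    · apply Heap.ext'
      funext m
      by_cases hml : m = l
      · subst hml
        simp [Heap.union_f, Heap.single_f, Option.or, hl]
      · simp [Heap.union_f, Heap.single_f, Heap.erase_f, hml]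
    · rw [Sat_sizeEq, Heap.dom_single]
      exact Set.ncard_singleton l
    · rw [Sat_septr]
      refine ⟨Heap.single (s y) l, ?_, ⟨?_, ?_, ?_⟩, ?_⟩
      · intro m
        by_cases hm : m = s y
        · right
          simp [Heap.single_f, hm, Ne.symm hly]
        · left
          simp [Heap.single_f, hm]
      · rw [Sat_alloc, Heap.dom_single]
        rfl
      · show ¬ (Heap.single (s y) l).f (s y) = some (s x)
        simp [Heap.single_f, hlx]
      · rw [Sat_sizeEq, Heap.dom_single]
        exact Set.ncard_singleton _
      · -- reach(y,x) = 2 on single l (s x) ∪ single (s y) l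
        set H : Heap := (Heap.single l (s x)).union (Heap.single (s y) l) with hH
        have hHf : ∀ m, H.f m =
            if m = l then some (s x) else if m = s y then some l else none := by
          intro m
          by_cases hm : m = l
          · simp [hH, Heap.union_f, Heap.single_f, hm, Option.or]
          · by_cases hm' : m = s y
            · simp [hH, Heap.union_f, Heap.single_f, hm, hm', Option.or, Ne.symm hly]
            · simp [hH, Heap.union_f, Heap.single_f, hm, hm', Option.or]
        refine ⟨H, Heap.empty, ?_, ?_, ⟨?_, ?_⟩, trivial⟩
        · intro m; right; rfl
        · apply Heap.ext'
          funext m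
          simp [Heap.union_f, Heap.empty, Option.or]
          cases H.f m <;> simp [Option.or]
        · rw [Sat_sizeEq, hH, Heap.dom_union, Heap.dom_single, Heap.dom_single]
          rw [Set.singleton_union]
          exact Set.ncard_pair hly
        · -- lsSem
          right
          refine ⟨2, by omega, fun i => if i = 0 then s y else if i = 1 then l else s x,
            by simp, by simp, ?_, ?_, ?_⟩
          · intro i hi j hj hij
            have a1 : s x ≠ l := Ne.symm hlx
            have a2 : s y ≠ l := Ne.symm hly
            have a3 : s y ≠ s x := Ne.symm hxy
            interval_cases i <;> interval_cases j <;> simp_all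
          · ext m
            simp only [Heap.dom, Set.mem_setOf_eq, hHf]
            constructor
            · intro hm
              by_cases h1 : m = l
              · exact ⟨1, by omega, by simp [h1]⟩
              · by_cases h2 : m = s y
                · exact ⟨0, by omega, by simp [h2]⟩
                · simp [h1, h2] at hm
            · rintro ⟨i, hi, rfl⟩
              interval_cases i <;> simp [hHf, Ne.symm hly, hly]
          · intro i hi
            interval_cases i <;> simp [hHf, Ne.symm hly, hly]

end SL4
end
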